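/- Let p > 0, N ≥ 2, equal weights wᵢ = 1/N, and let Ẽ_N^p be the unconfined p-approximated discrete Keller–Segel energy on U = {x ∈ ℝ^N : x₁ < ⋯ < x_N}. If χ > χ₂(N) := 1 + 1/(N−1), then there exists no map x : [0,∞) → U with differentiable coordinates satisfying (1/N) xᵢ'(t) = −(∂Ẽ_N^p/∂xᵢ)(x(t)) for every t ≥ 0 and every i; in other words, every solution of the p-approximated discrete Keller–Segel gradient flow blows up in finite time. -/

import Mathlib

open Real Finset

/-- `rᵢᵖ = min_p(Δxᵢ, Δxᵢ₊₁) = ((Δxᵢ^{−p} + Δxᵢ₊₁^{−p})/2)^{−1/p}`, with the boundary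
convention `r₁ᵖ = 2^{1/p} Δx₂` and `r_Nᵖ = 2^{1/p} Δx_N`, for `N = n + 2` particles
indexed from `0` to `n+1`. -/
noncomputable def rballp (p : ℝ) (n : ℕ) (x : Fin (n + 2) → ℝ) (i : Fin (n + 2)) : ℝ :=
  if i.val = 0 then (2 : ℝ) ^ (1 / p) * (x 1 - x 0)
  else if i.val = n + 1 then (2 : ℝ) ^ (1 / p) * (x i - x (i - 1))
  else (((x i - x (i - 1)) ^ (-p) + (x (i + 1) - x i) ^ (-p)) / 2) ^ (-1 / p)

/-- The unconfined `p`-approximated discrete modified Keller–Segel energy with equal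
weights `wᵢ = 1/N`, `N = n + 2`:
`Ẽ_N^p(x) = Σᵢ (1/N) log(1/(N rᵢᵖ)) + (χ/N²) Σᵢ Σ_{j≠i} log|xᵢ − xⱼ|`. -/
noncomputable def kspEnergy (p : ℝ) (n : ℕ) (χ : ℝ) (x : Fin (n + 2) → ℝ) : ℝ :=
  ∑ i, (1 / ((n : ℝ) + 2)) * Real.log (1 / (((n : ℝ) + 2) * rballp p n x i)) +
    (χ / ((n : ℝ) + 2) ^ 2) * ∑ i, ∑ j ∈ Finset.univ.erase i, Real.log |x i - x j|

section Aux

variable {p : ℝ} {n : ℕ}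

lemma fin_val_sub_one {i : Fin (n + 2)} (h : i.val ≠ 0) :
    ((i - 1 : Fin (n + 2))).val = i.val - 1 := by
  rw [Fin.coe_sub_one, if_neg]
  intro h'; apply h; simp [h']

lemma fin_val_add_one {i : Fin (n + 2)} (h : i.val ≠ n + 1) :
    ((i + 1 : Fin (n + 2))).val = i.val + 1 := by
  rw [Fin.val_add_one, if_neg]
  simpa [Fin.ext_iff] using h

lemma sub_pos_of_sm {x : Fin (n + 2) → ℝ} (hx : StrictMono x) {i j : Fin (n + 2)}
    (h : j.val < i.val) : 0 < x i - x j :=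
  sub_pos.2 (hx (by rwa [Fin.lt_def]))

lemma rballp_pos (hp : 0 < p) {x : Fin (n + 2) → ℝ} (hx : StrictMono x) (i : Fin (n + 2)) :
    0 < rballp p n x i := by
  unfold rballp
  split_ifs with h0 h1
  · exact mul_pos (Real.rpow_pos_of_pos two_pos _)
      (sub_pos_of_sm hx (by simp))
  · exact mul_pos (Real.rpow_pos_of_pos two_pos _)
      (sub_pos_of_sm hx (by rw [fin_val_sub_one h0]; omega))
  · have hΔ1 : 0 < x i - x (i - 1) := sub_pos_of_sm hx (by rw [fin_val_sub_one h0]; omega)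
    have hΔ2 : 0 < x (i + 1) - x i := sub_pos_of_sm hx (by rw [fin_val_add_one h1]; omega)
    apply Real.rpow_pos_of_pos
    have h1 : 0 < (x i - x (i - 1)) ^ (-p) := Real.rpow_pos_of_pos hΔ1 _
    have h2 : 0 < (x (i + 1) - x i) ^ (-p) := Real.rpow_pos_of_pos hΔ2 _
    linarith

lemma rballp_smul (hp : 0 < p) {x : Fin (n + 2) → ℝ} (hx : StrictMono x) {c : ℝ}
    (hc : 0 < c) (i : Fin (n + 2)) :
    rballp p n (c • x) i = c * rballp p n x i := by
  have hΔ : ∀ j k : Fin (n + 2), (c • x) j - (c • x) k = c * (x j - x k) := by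
    intro j k; simp [smul_eq_mul]; ring
  unfold rballp
  split_ifs with h0 h1
  · rw [hΔ]; ring
  · rw [hΔ]; ring
  · have hΔ1 : 0 < x i - x (i - 1) := sub_pos_of_sm hx (by rw [fin_val_sub_one h0]; omega)
    have hΔ2 : 0 < x (i + 1) - x i := sub_pos_of_sm hx (by rw [fin_val_add_one h1]; omega)
    rw [hΔ, hΔ, Real.mul_rpow hc.le hΔ1.le, Real.mul_rpow hc.le hΔ2.le]
    have hsum : (c ^ (-p) * (x i - x (i - 1)) ^ (-p) + c ^ (-p) * (x (i + 1) - x i) ^ (-p)) / 2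
        = c ^ (-p) * (((x i - x (i - 1)) ^ (-p) + (x (i + 1) - x i) ^ (-p)) / 2) := by ring
    rw [hsum]
    have hs_pos : 0 < ((x i - x (i - 1)) ^ (-p) + (x (i + 1) - x i) ^ (-p)) / 2 := by
      have h1 : 0 < (x i - x (i - 1)) ^ (-p) := Real.rpow_pos_of_pos hΔ1 _
      have h2 : 0 < (x (i + 1) - x i) ^ (-p) := Real.rpow_pos_of_pos hΔ2 _
      linarith
    rw [Real.mul_rpow (Real.rpow_pos_of_pos hc _).le hs_pos.le, ← Real.rpow_mul hc.le]
    have : -p * (-1 / p) = 1 := by field_simp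
    rw [this, Real.rpow_one]

lemma rballp_diff (hp : 0 < p) {x : Fin (n + 2) → ℝ} (hx : StrictMono x) (i : Fin (n + 2)) :
    DifferentiableAt ℝ (fun y => rballp p n y i) x := by
  have hproj : ∀ j : Fin (n + 2), DifferentiableAt ℝ (fun y : Fin (n + 2) → ℝ => y j) x :=
    fun j => (ContinuousLinearMap.proj j : (Fin (n + 2) → ℝ) →L[ℝ] ℝ).differentiableAt
  by_cases h0 : i.val = 0
  · simp only [rballp, if_pos h0]
    exact ((hproj 1).sub (hproj 0)).const_mul _
  by_cases h1 : i.val = n + 1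
  · simp only [rballp, if_neg h0, if_pos h1]
    exact ((hproj i).sub (hproj (i - 1))).const_mul _
  · simp only [rballp, if_neg h0, if_neg h1]
    have hΔ1 : 0 < x i - x (i - 1) := sub_pos_of_sm hx (by rw [fin_val_sub_one h0]; omega)
    have hΔ2 : 0 < x (i + 1) - x i := sub_pos_of_sm hx (by rw [fin_val_add_one h1]; omega)
    have hs_pos : 0 < ((x i - x (i - 1)) ^ (-p) + (x (i + 1) - x i) ^ (-p)) / 2 := by
      have ha : 0 < (x i - x (i - 1)) ^ (-p) := Real.rpow_pos_of_pos hΔ1 _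
      have hb : 0 < (x (i + 1) - x i) ^ (-p) := Real.rpow_pos_of_pos hΔ2 _
      linarith
    have hA : DifferentiableAt ℝ (fun y : Fin (n + 2) → ℝ => (y i - y (i - 1)) ^ (-p)) x :=
      ((hproj i).sub (hproj (i - 1))).rpow_const (Or.inl hΔ1.ne')
    have hB : DifferentiableAt ℝ (fun y : Fin (n + 2) → ℝ => (y (i + 1) - y i) ^ (-p)) x :=
      ((hproj (i + 1)).sub (hproj i)).rpow_const (Or.inl hΔ2.ne')
    have hC : DifferentiableAt ℝ
        (fun y : Fin (n + 2) → ℝ => ((y i - y (i - 1)) ^ (-p) + (y (i + 1) - y i) ^ (-p)) / 2) x := by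
      have h : (fun y : Fin (n + 2) → ℝ =>
          ((y i - y (i - 1)) ^ (-p) + (y (i + 1) - y i) ^ (-p)) / 2)
          = fun y : Fin (n + 2) → ℝ =>
          ((y i - y (i - 1)) ^ (-p) + (y (i + 1) - y i) ^ (-p)) * (2 : ℝ)⁻¹ := by
        funext y; rw [div_eq_mul_inv]
      rw [h]
      exact (hA.add hB).mul_const _
    exact hC.rpow_const (Or.inl hs_pos.ne')

lemma kspEnergy_diff (hp : 0 < p) {x : Fin (n + 2) → ℝ} (hx : StrictMono x) (χ : ℝ) :
    DifferentiableAt ℝ (kspEnergy p n χ) x := by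
  have hproj : ∀ j : Fin (n + 2), DifferentiableAt ℝ (fun y : Fin (n + 2) → ℝ => y j) x :=
    fun j => (ContinuousLinearMap.proj j : (Fin (n + 2) → ℝ) →L[ℝ] ℝ).differentiableAt
  have hN : (0 : ℝ) < (n : ℝ) + 2 := by positivity
  unfold kspEnergy
  apply DifferentiableAt.add
  · apply DifferentiableAt.fun_sum
    intro i _
    apply DifferentiableAt.const_mul
    have heq : (fun y : Fin (n + 2) → ℝ => Real.log (1 / (((n : ℝ) + 2) * rballp p n y i)))
        = fun y => -Real.log (((n : ℝ) + 2) * rballp p n y i) := by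
      funext y; rw [one_div, Real.log_inv]
    rw [heq]
    exact (((rballp_diff hp hx i).const_mul _).log
      (mul_pos hN (rballp_pos hp hx i)).ne').neg
  · apply DifferentiableAt.const_mul
    apply DifferentiableAt.fun_sum
    intro i _
    apply DifferentiableAt.fun_sum
    intro j hj
    have hij : i ≠ j := (Finset.ne_of_mem_erase hj).symm
    have hne : x i - x j ≠ 0 := sub_ne_zero.2 fun h => hij (hx.injective h)
    have heq : (fun y : Fin (n + 2) → ℝ => Real.log |y i - y j|)
        = fun y => Real.log (y i - y j) := by
      funext y; rw [Real.log_abs]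
    rw [heq]
    exact ((hproj i).sub (hproj j)).log hne

lemma kspEnergy_smul (hp : 0 < p) {x : Fin (n + 2) → ℝ} (hx : StrictMono x) (χ : ℝ)
    {c : ℝ} (hc : 0 < c) :
    kspEnergy p n χ (c • x) = kspEnergy p n χ x
      + (χ * ((n : ℝ) + 1) / ((n : ℝ) + 2) - 1) * Real.log c := by
  have hN : (0 : ℝ) < (n : ℝ) + 2 := by positivity
  unfold kspEnergy
  have h1 : ∀ i : Fin (n + 2),
      (1 / ((n : ℝ) + 2)) * Real.log (1 / (((n : ℝ) + 2) * rballp p n (c • x) i))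
      = (1 / ((n : ℝ) + 2)) * Real.log (1 / (((n : ℝ) + 2) * rballp p n x i))
        - (1 / ((n : ℝ) + 2)) * Real.log c := by
    intro i
    rw [rballp_smul hp hx hc, one_div (((n : ℝ) + 2) * (c * rballp p n x i)),
      one_div (((n : ℝ) + 2) * rballp p n x i), Real.log_inv, Real.log_inv,
      show ((n : ℝ) + 2) * (c * rballp p n x i) = (((n : ℝ) + 2) * rballp p n x i) * c by ring,
      Real.log_mul (mul_pos hN (rballp_pos hp hx i)).ne' hc.ne']
    ring
  have h2 : ∀ i j : Fin (n + 2), i ≠ j →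
      Real.log |(c • x) i - (c • x) j| = Real.log c + Real.log |x i - x j| := by
    intro i j hij
    have hne : x i - x j ≠ 0 := sub_ne_zero.2 fun h => hij (hx.injective h)
    have : (c • x) i - (c • x) j = c * (x i - x j) := by simp [smul_eq_mul]; ring
    rw [this, abs_mul, abs_of_pos hc, Real.log_mul hc.ne' (abs_ne_zero.2 hne)]
  rw [Finset.sum_congr rfl fun i _ => h1 i, Finset.sum_sub_distrib, Finset.sum_const,
    Finset.card_univ, Fintype.card_fin]
  have h3 : ∀ i : Fin (n + 2),
      ∑ j ∈ Finset.univ.erase i, Real.log |(c • x) i - (c • x) j|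
      = ((n : ℝ) + 1) * Real.log c + ∑ j ∈ Finset.univ.erase i, Real.log |x i - x j| := by
    intro i
    rw [Finset.sum_congr rfl fun j hj => h2 i j (Finset.ne_of_mem_erase hj).symm,
      Finset.sum_add_distrib, Finset.sum_const, Finset.card_erase_of_mem (Finset.mem_univ i),
      Finset.card_univ, Fintype.card_fin]
    push_cast
    ring
  rw [Finset.sum_congr rfl fun i _ => h3 i, Finset.sum_add_distrib, Finset.sum_const,
    Finset.card_univ, Fintype.card_fin]
  push_cast
  have hM : ((n : ℝ) + 2) * ((n : ℝ) + 2)⁻¹ = 1 := mul_inv_cancel₀ hN.ne'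
  generalize hMdef : ((n : ℝ) + 2) = M at hM ⊢
  linear_combination (-(Real.log c) + χ * ((n : ℝ) + 1) * Real.log c * M⁻¹) * hM
    + (-(Real.log c) * M⁻¹ + χ * Real.log c * ((n : ℝ) + 1) * M⁻¹ ^ 2) * hMdef

lemma kspEnergy_fderiv_self (hp : 0 < p) {x : Fin (n + 2) → ℝ} (hx : StrictMono x) (χ : ℝ) :
    fderiv ℝ (kspEnergy p n χ) x x = χ * ((n : ℝ) + 1) / ((n : ℝ) + 2) - 1 := by
  have hdiff := kspEnergy_diff hp hx χ
  have hsm : HasDerivAt (fun c : ℝ => c • x) x 1 := by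
    simpa using (hasDerivAt_id (1 : ℝ)).smul_const x
  have hE : HasFDerivAt (kspEnergy p n χ) (fderiv ℝ (kspEnergy p n χ) x)
      ((fun c : ℝ => c • x) 1) := by
    simpa using hdiff.hasFDerivAt
  have h1 : HasDerivAt (fun c : ℝ => kspEnergy p n χ (c • x))
      (fderiv ℝ (kspEnergy p n χ) x x) 1 := by
    exact hE.comp_hasDerivAt 1 hsm
  have heq : (fun c : ℝ => kspEnergy p n χ (c • x)) =ᶠ[nhds (1 : ℝ)]
      fun c => kspEnergy p n χ x + (χ * ((n : ℝ) + 1) / ((n : ℝ) + 2) - 1) * Real.log c := by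
    filter_upwards [eventually_gt_nhds one_pos] with c hc
    exact kspEnergy_smul hp hx χ hc
  have h2 : HasDerivAt
      (fun c : ℝ => kspEnergy p n χ x + (χ * ((n : ℝ) + 1) / ((n : ℝ) + 2) - 1) * Real.log c)
      ((χ * ((n : ℝ) + 1) / ((n : ℝ) + 2) - 1) * (1 : ℝ)⁻¹) 1 :=
    (((Real.hasDerivAt_log one_ne_zero).const_mul _).const_add _)
  have h1' := h1.congr_of_eventuallyEq heq.symm
  have := h1'.unique h2
  simpa using this

lemma fderiv_apply_sum {y : Fin (n + 2) → ℝ}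
    (L : (Fin (n + 2) → ℝ) →L[ℝ] ℝ) :
    L y = ∑ i, y i * L (Pi.single i 1) := by
  conv_lhs => rw [← Finset.univ_sum_single y]
  rw [map_sum]
  refine Finset.sum_congr rfl fun i _ => ?_
  have h : (Pi.single i (y i) : Fin (n + 2) → ℝ)
      = y i • (Pi.single i (1 : ℝ) : Fin (n + 2) → ℝ) := by
    ext j
    by_cases h : j = i <;> simp [Pi.single_apply, h]
  rw [h, map_smul, smul_eq_mul]

end Aux

/-- if `χ > χ₂(N) = 1 + 1/(N−1)`, then there is no global-in-time solution
`x : [0,∞) → U` of the `p`-approximated discrete unconfined Keller–Segel gradient flow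
`(1/N) xᵢ' = −∂Ẽ_N^p/∂xᵢ`; i.e., every solution blows up in finite time. -/
theorem ksp_blow_up (p : ℝ) (hp : 0 < p) (n : ℕ) (χ : ℝ)
    (hχ : 1 + 1 / ((n : ℝ) + 1) < χ) :
    ¬ ∃ x : ℝ → Fin (n + 2) → ℝ,
      ∀ t : ℝ, 0 ≤ t → (StrictMono (x t) ∧ ∀ i : Fin (n + 2),
        HasDerivAt (fun s => x s i)
          (-((n : ℝ) + 2) * fderiv ℝ (kspEnergy p n χ) (x t) (Pi.single i 1)) t) := by
  rintro ⟨X, hX⟩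
  set N : ℝ := (n : ℝ) + 2 with hNdef
  have hN : (0 : ℝ) < N := by positivity
  set cst : ℝ := χ * ((n : ℝ) + 1) / ((n : ℝ) + 2) - 1 with hcstdef
  have hn1 : (0 : ℝ) < (n : ℝ) + 1 := by positivity
  have hcst : 0 < cst := by
    have h : (n : ℝ) + 2 < χ * ((n : ℝ) + 1) := by
      have := mul_lt_mul_of_pos_right hχ hn1
      have heq : (1 + 1 / ((n : ℝ) + 1)) * ((n : ℝ) + 1) = (n : ℝ) + 2 := by
        field_simp
        ring
      rw [heq] at this
      exact this
    rw [hcstdef, sub_pos, lt_div_iff₀ (by positivity : (0:ℝ) < (n : ℝ) + 2)]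
    linarith
  set κ : ℝ := 2 * N * cst with hκdef
  have hκ : 0 < κ := by positivity
  set V : ℝ → ℝ := fun t => ∑ i, (X t i) ^ 2 with hVdef
  have hVnn : ∀ t, 0 ≤ V t := fun t => Finset.sum_nonneg fun i _ => sq_nonneg _
  have hV : ∀ t, 0 ≤ t → HasDerivAt V (-κ) t := by
    intro t ht
    obtain ⟨hmono, hder⟩ := hX t ht
    set L := fderiv ℝ (kspEnergy p n χ) (X t) with hLdef
    have hsum : HasDerivAt V
        (∑ i, (2 : ℝ) * X t i ^ 1 * (-N * L (Pi.single i 1))) t := by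
      apply HasDerivAt.fun_sum
      intro i _
      have := (hder i).pow 2
      have h2 : (2 : ℝ) * X t i ^ 1 * (-N * L (Pi.single i 1))
          = ((2 : ℕ) : ℝ) * X t i ^ (2 - 1) * (-N * L (Pi.single i 1)) := by norm_num
      rw [h2]; exact this
    have hLX : L (X t) = cst := kspEnergy_fderiv_self hp hmono χ
    have hexp : L (X t) = ∑ i, X t i * L (Pi.single i 1) :=
      fderiv_apply_sum L
    have hval : ∑ i, (2 : ℝ) * X t i ^ 1 * (-N * L (Pi.single i 1)) = -κ := by
      calc ∑ i, (2 : ℝ) * X t i ^ 1 * (-N * L (Pi.single i 1))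
          = -(2 * N) * ∑ i, X t i * L (Pi.single i 1) := by
            rw [Finset.mul_sum]
            exact Finset.sum_congr rfl fun i _ => by ring
        _ = -(2 * N) * cst := by rw [← hexp, hLX]
        _ = -κ := by rw [hκdef]; ring
    rwa [hval] at hsum
  -- The function g t = V t + κ t has derivative 0 on [0, ∞)
  set g : ℝ → ℝ := fun t => V t + κ * t with hgdef
  have hg : ∀ t, 0 ≤ t → HasDerivAt g 0 t := by
    intro t ht
    have := (hV t ht).add ((hasDerivAt_id t).const_mul κ)
    have h0 : (0 : ℝ) = -κ + κ * 1 := by ring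
    rw [h0]; exact this
  set T : ℝ := (V 0 + 1) / κ with hTdef
  have hT : 0 < T := div_pos (by linarith [hVnn 0]) hκ
  have hconst := constant_of_has_deriv_right_zero (f := g) (a := 0) (b := T)
    (fun s hs => ((hg s hs.1).continuousAt).continuousWithinAt)
    (fun s hs => ((hg s hs.1).hasDerivWithinAt))
  have hgT : g T = g 0 := hconst T ⟨hT.le, le_refl T⟩
  have hκT : κ * T = V 0 + 1 := by
    rw [hTdef, mul_div_cancel₀ _ hκ.ne']
  have : V T = -1 := by
    have h0 : g 0 = V 0 := by simp [hgdef]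
    have hT' : g T = V T + κ * T := rfl
    rw [hT', h0, hκT] at hgT
    linarith
  linarith [hVnn T]
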